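/- If w is a word 12-representing a labeled graph G, then the word obtained from the reverse of w by replacing each letter x with n+1−x (where n is the largest vertex label) 12-represents the supplement graph G̅, where xy is an edge of G̅ if and only if (n+1−x)(n+1−y) is an edge of G. -/

import Mathlib

/-- A word has no 12-match iff no two consecutive letters form a strictly
increasing pair, i.e. the word is weakly decreasing at each step. -/
def NoMatch12 (w : List ℕ) : Prop := w.Chain' (fun a b => b ≤ a)

/-- `w` 12-represents the labeled graph with vertex set `V ⊂ ℕ` and edge relation
`E`: every vertex occurs in `w`, all letters of `w` are vertices, and for all
distinct vertices `x, y`: `xy` is an edge iff the subsequence of `w` consisting of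
occurrences of `x` and `y` has no 12-match. -/
def Rep12 (V : Finset ℕ) (E : ℕ → ℕ → Prop) (w : List ℕ) : Prop :=
  (∀ v ∈ V, v ∈ w) ∧ (∀ a ∈ w, a ∈ V) ∧
    ∀ x ∈ V, ∀ y ∈ V, x ≠ y →
      (E x y ↔ NoMatch12 (w.filter (fun a => a = x ∨ a = y)))

lemma chain'_congr_mem {α} {R S : α → α → Prop} : ∀ {l : List α},
    (∀ a ∈ l, ∀ b ∈ l, (R a b ↔ S a b)) → (l.Chain' R ↔ l.Chain' S)
  | [], _ => by simp [List.Chain']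
  | [a], _ => by simp [List.Chain']
  | a :: b :: t, h => by
    show List.IsChain R _ ↔ List.IsChain S _
    rw [List.isChain_cons_cons, List.isChain_cons_cons,
      h a (by simp) b (by simp),
      show List.IsChain R (b :: t) ↔ List.IsChain S (b :: t) from chain'_congr_mem (fun x hx y hy =>
        h x (List.mem_cons_of_mem _ hx) y (List.mem_cons_of_mem _ hy))]

/-- if `w` 12-represents `G` on `{1,…,n}`, then reversing `w` and
replacing each letter `x` by `n+1−x` gives a word 12-representing the supplement
graph, in which `x y` is an edge iff `(n+1−x)(n+1−y)` is an edge of `G`. -/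
theorem stmt_10 (n : ℕ) (E : ℕ → ℕ → Prop) (w : List ℕ)
    (h : Rep12 (Finset.Icc 1 n) E w) :
    Rep12 (Finset.Icc 1 n) (fun x y => E (n + 1 - x) (n + 1 - y))
      (w.reverse.map (fun a => n + 1 - a)) := by
  obtain ⟨h1, h2, h3⟩ := h
  have hmem : ∀ a ∈ w, 1 ≤ a ∧ a ≤ n := by
    intro a ha; simpa [Finset.mem_Icc] using h2 a ha
  refine ⟨?_, ?_, ?_⟩
  · intro v hv
    simp only [Finset.mem_Icc] at hv
    simp only [List.mem_map, List.mem_reverse]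
    refine ⟨n + 1 - v, h1 _ (by simp [Finset.mem_Icc]; omega), by omega⟩
  · intro a ha
    simp only [List.mem_map, List.mem_reverse] at ha
    obtain ⟨b, hb, rfl⟩ := ha
    have := hmem b hb
    simp [Finset.mem_Icc]; omega
  · intro x hx y hy hxy
    simp only [Finset.mem_Icc] at hx hy
    have hfx : n + 1 - x ∈ Finset.Icc 1 n := by simp [Finset.mem_Icc]; omega
    have hfy : n + 1 - y ∈ Finset.Icc 1 n := by simp [Finset.mem_Icc]; omega
    have hne : n + 1 - x ≠ n + 1 - y := by omega
    show E (n + 1 - x) (n + 1 - y) ↔ _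
    rw [h3 _ hfx _ hfy hne]
    have hfilt : (w.reverse.map (fun a => n + 1 - a)).filter
          (fun a => decide (a = x ∨ a = y)) =
        ((w.filter (fun a => decide (a = n + 1 - x ∨ a = n + 1 - y))).map
          (fun a => n + 1 - a)).reverse := by
      rw [← List.map_reverse, List.filter_map, ← List.filter_reverse]
      congr 1
      apply List.filter_congr
      intro a ha
      rw [List.mem_reverse] at ha
      have := hmem a ha
      simp only [Function.comp]
      by_cases h1 : a = n + 1 - x <;> by_cases h2 : a = n + 1 - y <;>
        simp_all <;> omega
    unfold NoMatch12 List.Chain'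
    rw [hfilt, List.isChain_reverse, List.isChain_map]
    apply chain'_congr_mem
    intro a ha b hb
    have ha' := hmem a (List.mem_of_mem_filter ha)
    have hb' := hmem b (List.mem_of_mem_filter hb)
    constructor <;> intro <;> beta_reduce at * <;> omega
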